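/- Let m ≥ 0 and let λ_{i_0},…,λ_{i_{m+1}} be nonzero complex numbers with λ_{i_{m+1}} ≠ 1, λ_{i_k} = 1 for 0 ≤ k ≤ r-1 and λ_{i_k} ≠ 1 for r ≤ k ≤ m. Define the (m+1)×(m+1) matrix H = I + (1/(λ_{i_{m+1}}-1)) · L · D, where L is the matrix with (j,k)-entry equal to 1 if j ≤ k and λ_{i_{m+1}} if j > k, and D = diag(0,…,0, (λ_{i_r}-1)/λ_{i_r}, …, (λ_{i_m}-1)/λ_{i_m}) with r zeros. Then det H = (1 - λ_{i_{m+2}})/(1 - λ_{i_{m+1}}^{-1}), where λ_{i_{m+2}} = (λ_{i_0}⋯λ_{i_{m+1}})^{-1}. In particular, if λ_{i_{m+2}} ≠ 1 then H is invertible. -/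

import Mathlib

open Matrix Finset

/-- Telescoping sum. -/
lemma tele_aux (f : ℕ → ℂ) (n : ℕ) :
    ∑ k ∈ Finset.range n, (1 - (f k)⁻¹) * ∏ i ∈ Finset.range k, (f i)⁻¹
      = 1 - ∏ i ∈ Finset.range n, (f i)⁻¹ := by
  induction n with
  | zero => simp
  | succ n ih => rw [Finset.sum_range_succ, ih, Finset.prod_range_succ]; ring

/-- Proposition 3.1 / equation (12): determinant of the intersection matrix. -/
theorem stmt_0 (m r : ℕ) (l : ℕ → ℂ)
    (hl0 : ∀ i ≤ m + 1, l i ≠ 0)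
    (hlm1 : l (m + 1) ≠ 1)
    (hint : ∀ k < r, l k = 1)
    (hnint : ∀ k, r ≤ k → k ≤ m → l k ≠ 1)
    (lm2 : ℂ) (hlm2 : lm2 = (∏ i ∈ Finset.range (m + 2), l i)⁻¹)
    (H : Matrix (Fin (m + 1)) (Fin (m + 1)) ℂ)
    (hH : H = 1 + (l (m + 1) - 1)⁻¹ •
      ((Matrix.of fun j k : Fin (m + 1) => if (j : ℕ) ≤ (k : ℕ) then 1 else l (m + 1)) *
        Matrix.diagonal (fun k : Fin (m + 1) =>
          if (k : ℕ) < r then 0 else (l (k : ℕ) - 1) / l (k : ℕ)))) :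
    H.det = (1 - lm2) / (1 - (l (m + 1))⁻¹) ∧ (lm2 ≠ 1 → IsUnit H) := by
  set Λ : ℂ := l (m + 1) with hΛ
  have hΛ0 : Λ ≠ 0 := hl0 _ le_rfl
  have hΛ1 : Λ - 1 ≠ 0 := sub_ne_zero.mpr hlm1
  set c : ℂ := (Λ - 1)⁻¹ with hc
  set d : ℕ → ℂ := fun k => 1 - (l k)⁻¹ with hd
  have hdiag : ∀ k : Fin (m + 1),
      (if (k : ℕ) < r then 0 else (l (k : ℕ) - 1) / l (k : ℕ)) = d (k : ℕ) := by
    intro k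
    by_cases hk : (k : ℕ) < r
    · rw [if_pos hk, hd]; simp [hint _ hk]
    · rw [if_neg hk, hd]
      have hk0 : l (k : ℕ) ≠ 0 := hl0 _ (le_trans (Nat.le_of_lt_succ k.isLt) (Nat.le_succ m))
      field_simp
  set u : Fin (m + 1) → ℂ := fun j => ∏ i ∈ Finset.range (j : ℕ), (l i)⁻¹ with hu
  set B : Matrix (Fin (m + 1)) (Fin (m + 1)) ℂ :=
    1 + Matrix.of (fun j k : Fin (m + 1) => if (k : ℕ) < (j : ℕ) then d (k : ℕ) else 0) with hB
  -- B *ᵥ u = 1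
  have hBu : B *ᵥ u = fun _ => 1 := by
    funext j
    rw [hB, Matrix.add_mulVec, Matrix.one_mulVec]
    have h1 : (Matrix.of (fun j k : Fin (m + 1) =>
        if (k : ℕ) < (j : ℕ) then d (k : ℕ) else 0) *ᵥ u) j
        = ∑ k ∈ Finset.range (j : ℕ), d k * ∏ i ∈ Finset.range k, (l i)⁻¹ := by
      rw [Matrix.mulVec, dotProduct]
      simp only [Matrix.of_apply, hu]
      rw [Fin.sum_univ_eq_sum_range
        (fun k => (if k < (j : ℕ) then d k else 0) * ∏ i ∈ Finset.range k, (l i)⁻¹)]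
      rw [← Finset.sum_subset (Finset.range_subset_range.mpr j.isLt.le)
        (fun k _ hk' => by rw [if_neg (by simpa using hk'), zero_mul])]
      exact Finset.sum_congr rfl fun k hk => by rw [if_pos (Finset.mem_range.mp hk)]
    rw [Pi.add_apply, h1, hd]
    simp only
    rw [tele_aux l (j : ℕ)]
    simp [hu]
  set v : Fin (m + 1) → ℂ := fun k => c * d (k : ℕ) with hv
  have hcΛ : c * Λ = 1 + c := by rw [hc]; field_simp; ring
  have hfact : H = B * (1 + Matrix.replicateCol Unit u * Matrix.replicateRow Unit v) := by
    rw [Matrix.mul_add, Matrix.mul_one, ← Matrix.mul_assoc, ← Matrix.replicateCol_mulVec, hBu]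
    ext j k
    rw [hH]
    simp only [Matrix.add_apply, Matrix.smul_apply, Matrix.mul_apply, Matrix.of_apply,
      Matrix.diagonal_apply, hB, Matrix.replicateCol_apply, Matrix.replicateRow_apply, Finset.sum_const,
      Finset.card_univ, Fintype.card_unit, one_smul, hv, mul_ite, mul_zero, smul_eq_mul]
    rw [Finset.sum_ite_eq' Finset.univ k, if_pos (Finset.mem_univ k)]
    by_cases hk : (k : ℕ) < r
    · have hdk : d (k : ℕ) = 0 := by simp [hd, hint _ hk]
      simp [hk, hdk]
    · rw [if_neg hk]
      have hdk : (l (k : ℕ) - 1) / l (k : ℕ) = d (k : ℕ) := by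
        rw [← hdiag k, if_neg hk]
      rw [hdk]
      rcases le_or_gt (j : ℕ) (k : ℕ) with h | h
      · rw [if_pos h, if_neg (not_lt.mpr h)]; ring
      · rw [if_neg (not_le.mpr h), if_pos h]
        linear_combination d (k : ℕ) * hcΛ
  have hdetB : B.det = 1 := by
    have htri : B.BlockTriangular OrderDual.toDual := by
      intro i j hij
      have hij' : i < j := hij
      have hij'' : (i : ℕ) < (j : ℕ) := hij'
      rw [hB, Matrix.add_apply, Matrix.one_apply_ne (ne_of_lt hij'), Matrix.of_apply,
        if_neg (not_lt.mpr hij''.le)]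
      simp
    rw [Matrix.det_of_lowerTriangular B htri]
    apply Finset.prod_eq_one
    intro i _
    rw [hB, Matrix.add_apply, Matrix.one_apply_eq, Matrix.of_apply, if_neg (lt_irrefl _)]
    simp
  have hdet1 : H.det = 1 + c * (1 - ∏ i ∈ Finset.range (m + 1), (l i)⁻¹) := by
    rw [hfact, Matrix.det_mul, hdetB, one_mul, Matrix.det_one_add_replicateCol_mul_replicateRow,
      dotProduct]
    simp only [hv, hu, mul_assoc]
    rw [Fin.sum_univ_eq_sum_range
      (fun k => c * (d k * ∏ i ∈ Finset.range k, (l i)⁻¹)), ← Finset.mul_sum, hd]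
    simp only
    rw [tele_aux l (m + 1)]
  set P : ℂ := ∏ i ∈ Finset.range (m + 1), l i with hP
  have hP0 : P ≠ 0 := Finset.prod_ne_zero_iff.mpr fun i hi =>
    hl0 i (le_trans (Nat.le_of_lt_succ (Finset.mem_range.mp hi)) (Nat.le_succ m))
  have hprodinv : ∏ i ∈ Finset.range (m + 1), (l i)⁻¹ = P⁻¹ := by
    rw [hP, ← Finset.prod_inv_distrib]
  have hlm2' : lm2 = (P * Λ)⁻¹ := by rw [hlm2, Finset.prod_range_succ, hP, hΛ]
  have hden : 1 - Λ⁻¹ ≠ 0 := sub_ne_zero.mpr fun h => hlm1 (inv_eq_one.mp h.symm)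
  have hmain : H.det = (1 - lm2) / (1 - Λ⁻¹) := by
    rw [hdet1, hprodinv, hlm2', hc]
    field_simp
    ring
  refine ⟨hmain, fun hne => ?_⟩
  have hdet0 : H.det ≠ 0 := by
    rw [hmain]
    exact div_ne_zero (sub_ne_zero.mpr fun h => hne h.symm) hden
  exact (Matrix.isUnit_iff_isUnit_det H).mpr (isUnit_iff_ne_zero.mpr hdet0)
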